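/- arXiv:1702.01523 — 2 statements merged into one kernel-verified Lean document; each statement's English description precedes it below -/
import Mathlib

section
/- Let ω = e^{2πi/3}. With Ψ(x) = (ω^x φ₁, -(ω^{x+1}φ₁ + φ₃), φ₃) and the choice φ₁ = ω, φ₃ = ω², the measure μ(x) = ‖Ψ(x)‖² = 2(2 + Re(ω^x)) satisfies μ(x) = 6 if x ≡ 0 (mod 3) and μ(x) = 3 if x ≡ 1 or 2 (mod 3). In particular, μ is a non-uniform stationary measure of the three-state Fourier walk with period 3. -/
open Complex Matrix Finset

noncomputable def ω : ℂ := Complex.exp (2 * Real.pi * Complex.I / 3)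

lemma ω_ne : ω ≠ 0 := Complex.exp_ne_zero _

lemma ω_pow3 : ω ^ (3:ℕ) = 1 := by
  rw [ω, ← Complex.exp_nat_mul]
  rw [show ((3:ℕ):ℂ) * (2 * Real.pi * Complex.I / 3) = 2 * Real.pi * Complex.I by
    push_cast; ring]
  exact Complex.exp_two_pi_mul_I

lemma ω_re : ω.re = -(1/2) := by
  rw [ω, Complex.exp_re]
  have h1 : (2 * (Real.pi:ℂ) * Complex.I / 3).re = 0 := by simp
  have h2 : (2 * (Real.pi:ℂ) * Complex.I / 3).im = 2 * Real.pi / 3 := by simp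
  rw [h1, h2]
  rw [show 2 * Real.pi / 3 = Real.pi - Real.pi/3 by ring, Real.cos_pi_sub,
    Real.cos_pi_div_three]
  simp

lemma ω_abs : ‖ω‖ = 1 := by
  rw [ω, Complex.norm_exp]; simp

lemma ω_nsq : Complex.normSq ω = 1 := by
  have := Complex.sq_norm ω
  rw [ω_abs] at this
  simpa using this.symm

lemma ω_zpow_mod (x : ℤ) : ω ^ x = ω ^ (x % 3) := by
  have h3 : ω ^ ((3:ℤ) * (x/3)) = 1 := by
    rw [_root_.zpow_mul, show ((3:ℤ)) = ((3:ℕ):ℤ) from rfl, zpow_natCast, ω_pow3, _root_.one_zpow]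
  conv_lhs => rw [← Int.mul_ediv_add_emod x 3]
  rw [zpow_add₀ ω_ne, h3, one_mul]

lemma ω_sq_re : ((ω:ℂ)^(2:ℤ)).re = -(1/2) := by
  have h1 : (ω^(2:ℤ)) = ω * ω := by
    rw [show (2:ℤ) = ((2:ℕ):ℤ) from rfl, zpow_natCast]; ring
  have hns : ω.re * ω.re + ω.im * ω.im = 1 := by
    have := ω_nsq; rwa [Complex.normSq_apply] at this
  rw [h1, Complex.mul_re]
  nlinarith [ω_re, hns]

theorem fourier_periodic_stationary_measure
    (Ψ : ℤ → Fin 3 → ℂ)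
    (hΨ : Ψ = fun x => ![ω ^ x * ω, -(ω ^ (x + 1) * ω + ω ^ 2), ω ^ 2])
    (μ : ℤ → ℝ) (hμ : μ = fun x => ∑ i, ‖Ψ x i‖ ^ 2) :
    (∀ x : ℤ, μ x = 2 * (2 + (ω ^ x).re)) ∧
    (∀ x : ℤ, x % 3 = 0 → μ x = 6) ∧
    (∀ x : ℤ, x % 3 = 1 ∨ x % 3 = 2 → μ x = 3) ∧
    (∀ x : ℤ, μ (x + 3) = μ x) ∧
    ¬ (∀ x y : ℤ, μ x = μ y) := by
  have hnsq : ∀ z : ℂ, ‖z‖^2 = Complex.normSq z := fun z => by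
    rw [Complex.sq_norm]
  have hxnsq : ∀ x : ℤ, Complex.normSq (ω ^ x) = 1 := fun x => by
    rw [map_zpow₀ Complex.normSq ω x, ω_nsq, _root_.one_zpow]
  have key : ∀ x : ℤ, μ x = 2 * (2 + (ω ^ x).re) := by
    intro x
    subst hΨ hμ
    simp only [Fin.sum_univ_three, Matrix.cons_val_zero, Matrix.cons_val_one,
      Matrix.head_cons, Matrix.cons_val_two, Matrix.tail_cons]
    rw [hnsq, hnsq, hnsq]
    have harg : -(ω^(x+1)*ω + ω^(2:ℕ)) = -(ω^(2:ℕ) * (ω^x + 1)) := by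
      rw [zpow_add_one₀ ω_ne]; ring
    rw [harg, Complex.normSq_neg, Complex.normSq_mul, Complex.normSq_mul,
      Complex.normSq_add, map_pow, ω_nsq, hxnsq]
    simp only [Complex.normSq_one, _root_.map_one, mul_one, one_pow]
    ring
  refine ⟨key, ?_, ?_, ?_, ?_⟩
  · intro x hx
    rw [key, ω_zpow_mod, hx, zpow_zero]
    norm_num
  · intro x hx
    rw [key, ω_zpow_mod]
    rcases hx with h | h
    · rw [h, zpow_one, ω_re]; norm_num
    · rw [h, ω_sq_re]; norm_num
  · intro x
    rw [key, key]
    have : ω ^ (x + 3) = ω ^ x := by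
      rw [zpow_add₀ ω_ne, show (3:ℤ) = ((3:ℕ):ℤ) from rfl, zpow_natCast, ω_pow3, mul_one]
    rw [this]
  · intro h
    have h0 : μ 0 = 2 * (2 + ((ω:ℂ)^(0:ℤ)).re) := key 0
    have h1 : μ 1 = 2 * (2 + ((ω:ℂ)^(1:ℤ)).re) := key 1
    rw [zpow_zero] at h0
    rw [zpow_one, ω_re] at h1
    have := h 0 1
    rw [h0, h1] at this
    norm_num at this
end

section
/- Let ω = e^{2πi/3}, m ≥ 1, and consider the three-state Fourier walk on the cycle C_{3m} with coin A_F = (1/√3)[[1,1,1],[1,ω,ω²],[1,ω²,ω]] (with positions taken mod 3m). The function Ψ(x) = (ω^x φ₁, -(ω^{x+1}φ₁ + φ₃), φ₃) for x ∈ ℤ/3mℤ satisfies the eigenvalue equation U_{A_F}^{C_{3m}}Ψ = iΨ on the cycle, and for φ₁ = ω, φ₃ = ω² the stationary measure μ(x) = 2(2 + Re(ω^x)) on the cycle has period 3. -/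
open Complex Matrix Finset

noncomputable def fourierMatrix : Matrix (Fin 3) (Fin 3) ℂ :=
  (1 / Real.sqrt 3 : ℂ) • !![1, 1, 1; 1, ω, ω ^ 2; 1, ω ^ 2, ω]

noncomputable def walkCycle (N : ℕ) (A : Matrix (Fin 3) (Fin 3) ℂ)
    (Ψ : ZMod N → Fin 3 → ℂ) : ZMod N → Fin 3 → ℂ :=
  fun x => ![∑ j, A 0 j * Ψ (x + 1) j, ∑ j, A 1 j * Ψ x j, ∑ j, A 2 j * Ψ (x - 1) j]


lemma hprim : IsPrimitiveRoot ω 3 := by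
  have := Complex.isPrimitiveRoot_exp 3 (by norm_num)
  simpa [ω] using this
lemma hω3 : ω ^ 3 = 1 := hprim.pow_eq_one
lemma hsum : 1 + ω + ω ^ 2 = 0 := by
  have := hprim.geom_sum_eq_zero (by norm_num)
  simpa [Finset.sum_range_succ] using this
lemma hs3 : ((Real.sqrt 3 : ℝ) : ℂ) ^ 2 = 3 := by
  rw [← Complex.ofReal_pow, Real.sq_sqrt] <;> norm_num
lemma omega_eq : ω = -1/2 + ((Real.sqrt 3 : ℝ):ℂ)/2 * Complex.I := by
  have h : (2 * (Real.pi:ℂ) * Complex.I / 3) = ((2 * Real.pi / 3 : ℝ):ℂ) * Complex.I := by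
    push_cast; ring
  rw [ω, h, Complex.exp_mul_I, ← Complex.ofReal_cos, ← Complex.ofReal_sin]
  have h2 : (2 * Real.pi / 3) = Real.pi - Real.pi / 3 := by ring
  rw [h2, Real.cos_pi_sub, Real.sin_pi_sub, Real.cos_pi_div_three, Real.sin_pi_div_three]
  push_cast; ring
lemma hdiff : ω - ω ^ 2 = Complex.I * Real.sqrt 3 := by
  rw [omega_eq]
  linear_combination (-Complex.I^2/4) * hs3 + (-3/4 : ℂ) * Complex.I_sq
lemma hs0 : ((Real.sqrt 3 : ℝ):ℂ) ≠ 0 := by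
  simpa using Real.sqrt_ne_zero'.mpr (by norm_num : (0:ℝ) < 3)


theorem fourier_cycle_stationary (m : ℕ) (hm : 1 ≤ m) :
    (∀ φ₁ φ₃ : ℂ, ∀ Ψ : ZMod (3 * m) → Fin 3 → ℂ,
      (Ψ = fun x => ![ω ^ x.val * φ₁, -(ω ^ (x.val + 1) * φ₁ + φ₃), φ₃]) →
      walkCycle (3 * m) fourierMatrix Ψ = fun x i => Complex.I * Ψ x i) ∧
    (∀ Ψ : ZMod (3 * m) → Fin 3 → ℂ,
      (Ψ = fun x => ![ω ^ x.val * ω, -(ω ^ (x.val + 1) * ω + ω ^ 2), ω ^ 2]) →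
      ∀ x : ZMod (3 * m), ∑ i, ‖Ψ (x + 3) i‖ ^ 2 = ∑ i, ‖Ψ x i‖ ^ 2) := by
  haveI : NeZero (3 * m) := ⟨by omega⟩
  haveI : Fact (1 < 3 * m) := ⟨by omega⟩
  have hpow : ∀ a : ℕ, ω ^ (a % (3 * m)) = ω ^ a := by
    intro a
    conv_rhs => rw [← Nat.mod_add_div a (3 * m)]
    rw [pow_add, pow_mul, show ω ^ (3 * m) = 1 by rw [pow_mul, hω3, one_pow]]
    simp
  have hval1 : ∀ y : ZMod (3 * m), ω ^ (y + 1).val = ω ^ y.val * ω := by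
    intro y
    rw [ZMod.val_add, ZMod.val_one, hpow, pow_succ]
  have hvalsub : ∀ y : ZMod (3 * m), ω ^ (y - 1).val = ω ^ y.val * ω ^ 2 := by
    intro y
    have h := hval1 (y - 1)
    rw [sub_add_cancel] at h
    calc ω ^ (y - 1).val = ω ^ (y - 1).val * ω ^ 3 := by rw [hω3, mul_one]
      _ = (ω ^ (y - 1).val * ω) * ω ^ 2 := by ring
      _ = ω ^ y.val * ω ^ 2 := by rw [h]
  constructor
  · intro φ₁ φ₃ Ψ hΨ
    subst hΨ
    funext x i
    fin_cases i
    · simp only [walkCycle, fourierMatrix, Fin.sum_univ_three, Matrix.smul_apply,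
        Matrix.cons_val', Matrix.cons_val_zero, Matrix.cons_val_one, Matrix.head_cons,
        Matrix.empty_val', Matrix.cons_val_fin_one, Matrix.head_fin_const, smul_eq_mul,
        Matrix.cons_val_two, Matrix.tail_cons, hval1, hvalsub, pow_succ,
        Fin.zero_eta, Fin.mk_one, Matrix.of_apply]
      field_simp
      linear_combination (ω ^ x.val * φ₁) * hdiff
    · simp only [walkCycle, fourierMatrix, Fin.sum_univ_three, Matrix.smul_apply,
        Matrix.cons_val', Matrix.cons_val_zero, Matrix.cons_val_one, Matrix.head_cons,
        Matrix.empty_val', Matrix.cons_val_fin_one, Matrix.head_fin_const, smul_eq_mul,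
        Matrix.cons_val_two, Matrix.tail_cons, hval1, hvalsub, pow_succ,
        Fin.zero_eta, Fin.mk_one, Matrix.of_apply]
      field_simp
      linear_combination (-(ω * ω ^ x.val * φ₁ + φ₃)) * hdiff + (-(ω ^ x.val * φ₁)) * hω3
    · simp [walkCycle, fourierMatrix, Fin.sum_univ_three, hval1, hvalsub, pow_succ]
      field_simp
      linear_combination (φ₃) * hdiff + (-(ω ^ 2 * ω ^ x.val * φ₁)) * hω3
  · intro Ψ hΨ x
    subst hΨ
    have key : ω ^ (x + 3).val = ω ^ x.val := by
      have h3 : x + 3 = x + 1 + 1 + 1 := by ring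
      rw [h3, hval1, hval1, hval1]
      calc ω ^ x.val * ω * ω * ω = ω ^ x.val * ω ^ 3 := by ring
        _ = ω ^ x.val := by rw [hω3, mul_one]
    simp only [Fin.sum_univ_three, Matrix.cons_val_zero, Matrix.cons_val_one, Matrix.head_cons,
      Matrix.cons_val_two, Matrix.tail_cons, pow_succ, key]
end
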